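/- In the setting above, for m, n ∈ Specm Γ with M a group: |M_m| < ∞ if and only if for some n at least one of S(m,n), S(n,m) is nonempty and finite; and if |M_m| < ∞ and both S(m,n), S(n,m) are nonempty, then |M_n| < ∞ and |S(m,n)| = |S(n,m)|. -/
import Mathlib


/-- The set `S(m,n) = {φ ∈ M | ℓ_n ∈ G φ G · ℓ_m}`, for subgroups `G, M` of an ambient
group `Ω` acting on the space `X` of maximal ideals of the integral closure. -/
def galoisConnectingSet {Ω X : Type*} [Group Ω] [MulAction Ω X]
    (G M : Subgroup Ω) (lm ln : X) : Set Ω :=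
  {φ | φ ∈ M ∧ ∃ g₁ ∈ G, ∃ g₂ ∈ G, g₂ • ln = (φ * g₁) • lm}

section Aux

variable {Ω X : Type*} [Group Ω] [MulAction Ω X] (G M : Subgroup Ω)

lemma gc_inv_mem {lm ln : X} {φ : Ω} (h : φ ∈ galoisConnectingSet G M lm ln) :
    φ⁻¹ ∈ galoisConnectingSet G M ln lm := by
  obtain ⟨hφ, g₁, hg₁, g₂, hg₂, hw⟩ := h
  refine ⟨M.inv_mem hφ, g₂, hg₂, g₁, hg₁, ?_⟩
  rw [mul_smul, hw, mul_smul, inv_smul_smul]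

lemma gc_eq_inv_image (lm ln : X) :
    galoisConnectingSet G M ln lm = Inv.inv '' galoisConnectingSet G M lm ln := by
  ext φ
  constructor
  · intro h
    exact ⟨φ⁻¹, gc_inv_mem G M h, inv_inv φ⟩
  · rintro ⟨ψ, hψ, rfl⟩
    exact gc_inv_mem G M hψ

lemma stab_finite_of_gc {lm ln : X}
    (hconj : ∀ g ∈ G, ∀ φ ∈ M, g⁻¹ * φ * g ∈ M)
    (hne : (galoisConnectingSet G M lm ln).Nonempty)
    (hfin : (galoisConnectingSet G M lm ln).Finite) :
    ((M ⊓ MulAction.stabilizer Ω lm : Subgroup Ω) : Set Ω).Finite := by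
  obtain ⟨φ₀, hφ₀, g₁, hg₁, g₂, hg₂, hw⟩ := hne
  have hinj : Set.InjOn (fun ψ => φ₀ * g₁ * ψ * g₁⁻¹)
      ((M ⊓ MulAction.stabilizer Ω lm : Subgroup Ω) : Set Ω) := by
    intro a _ b _ h
    exact mul_left_cancel (mul_right_cancel h)
  have himg : (fun ψ => φ₀ * g₁ * ψ * g₁⁻¹) ''
      ((M ⊓ MulAction.stabilizer Ω lm : Subgroup Ω) : Set Ω) ⊆
      galoisConnectingSet G M lm ln := by
    rintro _ ⟨ψ, hψ, rfl⟩
    rw [SetLike.mem_coe, Subgroup.mem_inf] at hψ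
    obtain ⟨hψM, hψs⟩ := hψ
    have hψs' : ψ • lm = lm := hψs
    have hmem : φ₀ * g₁ * ψ * g₁⁻¹ ∈ M := by
      have : (g₁⁻¹)⁻¹ * ψ * g₁⁻¹ ∈ M := hconj g₁⁻¹ (G.inv_mem hg₁) ψ hψM
      rw [inv_inv] at this
      have := M.mul_mem hφ₀ this
      simpa [mul_assoc] using this
    refine ⟨hmem, g₁, hg₁, g₂, hg₂, ?_⟩
    have heq : φ₀ * g₁ * ψ * g₁⁻¹ * g₁ = φ₀ * g₁ * ψ := by group
    rw [heq, hw, mul_smul, mul_smul, mul_smul, hψs']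
  exact Set.Finite.of_finite_image (hfin.subset himg) hinj

lemma gc_finite_of_stab {lm : X} (hG : Finite G)
    (hconj : ∀ g ∈ G, ∀ φ ∈ M, g⁻¹ * φ * g ∈ M)
    (hfin : ((M ⊓ MulAction.stabilizer Ω lm : Subgroup Ω) : Set Ω).Finite)
    (ln : X) :
    (galoisConnectingSet G M lm ln).Finite := by
  have hsub : galoisConnectingSet G M lm ln ⊆
      ⋃ p : G × G, {φ : Ω | φ ∈ M ∧ (p.2 : Ω) • ln = (φ * (p.1 : Ω)) • lm} := by
    rintro φ ⟨hφ, g₁, hg₁, g₂, hg₂, hw⟩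
    exact Set.mem_iUnion.2 ⟨(⟨g₁, hg₁⟩, ⟨g₂, hg₂⟩), hφ, hw⟩
  refine Set.Finite.subset (Set.finite_iUnion fun p => ?_) hsub
  obtain ⟨⟨g₁, hg₁⟩, ⟨g₂, hg₂⟩⟩ := p
  rcases Set.eq_empty_or_nonempty
      {φ : Ω | φ ∈ M ∧ (g₂ : Ω) • ln = (φ * (g₁ : Ω)) • lm} with he | ⟨φ₀, hφ₀M, hφ₀w⟩
  · rw [he]; exact Set.finite_empty
  · have hsub2 : {φ : Ω | φ ∈ M ∧ (g₂ : Ω) • ln = (φ * (g₁ : Ω)) • lm} ⊆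
        (fun ψ => φ₀ * g₁ * ψ * g₁⁻¹) ''
          ((M ⊓ MulAction.stabilizer Ω lm : Subgroup Ω) : Set Ω) := by
      rintro φ ⟨hφM, hφw⟩
      refine ⟨g₁⁻¹ * (φ₀⁻¹ * φ) * g₁, ?_, by group⟩
      rw [SetLike.mem_coe, Subgroup.mem_inf]
      constructor
      · exact hconj g₁ hg₁ _ (M.mul_mem (M.inv_mem hφ₀M) hφM)
      · show (g₁⁻¹ * (φ₀⁻¹ * φ) * g₁) • lm = lm
        have : φ • ((g₁ : Ω) • lm) = φ₀ • ((g₁ : Ω) • lm) := by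
          rw [← mul_smul, ← mul_smul, ← hφw, hφ₀w]
        rw [mul_smul, mul_smul, mul_smul, this, inv_smul_smul, inv_smul_smul]
    exact Set.Finite.subset (hfin.image _) hsub2

lemma one_mem_gc (lm : X) : (1 : Ω) ∈ galoisConnectingSet G M lm lm :=
  ⟨M.one_mem, 1, G.one_mem, 1, G.one_mem, by simp⟩

end Aux


/-- In the Galois setting (`G` a finite group, `M` a group closed under
`G`-conjugation, both acting on the set `X` of liftings), for a lifting `ℓ_m`:
`|M_m| < ∞` iff for some `ℓ_n` at least one of `S(m,n)`, `S(n,m)` is nonempty and finite;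
and if `|M_m| < ∞` and both `S(m,n)`, `S(n,m)` are nonempty, then `|M_n| < ∞` and
`|S(m,n)| = |S(n,m)|`. -/
theorem stabilizer_finite_iff_connecting_set
    {Ω X : Type*} [Group Ω] [MulAction Ω X] (G M : Subgroup Ω)
    (hG : Finite G)
    (hconj : ∀ g ∈ G, ∀ φ ∈ M, g⁻¹ * φ * g ∈ M)
    (lm : X) :
    (((M ⊓ MulAction.stabilizer Ω lm : Subgroup Ω) : Set Ω).Finite ↔
      ∃ ln : X,
        ((galoisConnectingSet G M lm ln).Nonempty ∧ (galoisConnectingSet G M lm ln).Finite) ∨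
        ((galoisConnectingSet G M ln lm).Nonempty ∧ (galoisConnectingSet G M ln lm).Finite)) ∧
    ∀ ln : X,
      ((M ⊓ MulAction.stabilizer Ω lm : Subgroup Ω) : Set Ω).Finite →
      (galoisConnectingSet G M lm ln).Nonempty →
      (galoisConnectingSet G M ln lm).Nonempty →
      ((M ⊓ MulAction.stabilizer Ω ln : Subgroup Ω) : Set Ω).Finite ∧
        Nat.card (galoisConnectingSet G M lm ln) =
          Nat.card (galoisConnectingSet G M ln lm) := by
  constructor
  · constructor
    · intro hfin
      exact ⟨lm, Or.inl ⟨⟨1, one_mem_gc G M lm⟩, gc_finite_of_stab G M hG hconj hfin lm⟩⟩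
    · rintro ⟨ln, ⟨hne, hfin⟩ | ⟨hne, hfin⟩⟩
      · exact stab_finite_of_gc G M hconj hne hfin
      · have hne' : (galoisConnectingSet G M lm ln).Nonempty := by
          obtain ⟨φ, hφ⟩ := hne
          exact ⟨φ⁻¹, gc_inv_mem G M hφ⟩
        have hfin' : (galoisConnectingSet G M lm ln).Finite := by
          rw [gc_eq_inv_image G M ln lm]
          exact hfin.image _
        exact stab_finite_of_gc G M hconj hne' hfin'
  · intro ln hMm hmn hnm
    have hfinmn : (galoisConnectingSet G M lm ln).Finite :=
      gc_finite_of_stab G M hG hconj hMm ln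
    have hfinnm : (galoisConnectingSet G M ln lm).Finite := by
      rw [gc_eq_inv_image G M lm ln]
      exact hfinmn.image _
    refine ⟨stab_finite_of_gc G M hconj hnm hfinnm, ?_⟩
    rw [gc_eq_inv_image G M lm ln, Nat.card_image_of_injective inv_injective]
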